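/- Let f(s) = -2s³ + 3s² - s and let γ > 0, and define s(z) = ½(1 + tanh(γz/2)). If γ² = 1/(1 + 2L/3) for a constant L with 1 + 2L/3 > 0, then s satisfies (1 + 2L/3)·s''(z) + f(s(z)) = 0 for all z ∈ ℝ, together with s(-∞) = 0 and s(+∞) = 1. -/

import Mathlib

/-- The standard transition profile `s(z) = (1 + tanh(γ z / 2)) / 2`. -/
noncomputable def sProfile (γ z : ℝ) : ℝ := (1 + Real.tanh (γ * z / 2)) / 2

/-- The cubic nonlinearity `f(s) = -2 s³ + 3 s² - s`. -/
def fCubic (s : ℝ) : ℝ := -2 * s ^ 3 + 3 * s ^ 2 - s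

open Real Filter

lemma sProfile_eq (γ : ℝ) : sProfile γ = fun z => (1 + Real.exp (-(γ * z)))⁻¹ := by
  funext z
  unfold sProfile
  rw [Real.tanh_eq_sinh_div_cosh, Real.sinh_eq, Real.cosh_eq]
  have h1 : Real.exp (-(γ * z)) = Real.exp (-(γ * z / 2)) ^ 2 := by
    rw [sq, ← Real.exp_add]; ring_nf
  have h2 : Real.exp (γ * z / 2) * Real.exp (-(γ * z / 2)) = 1 := by
    rw [← Real.exp_add]; simp
  have hc : Real.exp (γ * z / 2) + Real.exp (-(γ * z / 2)) ≠ 0 := by positivity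
  have hd : 1 + Real.exp (-(γ * z)) ≠ 0 := by positivity
  rw [h1]
  set a := Real.exp (γ * z / 2)
  set b := Real.exp (-(γ * z / 2))
  have ha : 0 < a := Real.exp_pos _
  have hb : 0 < b := Real.exp_pos _
  have hab : a + b ≠ 0 := by positivity
  have hb2 : 1 + b ^ 2 ≠ 0 := by positivity
  field_simp
  linear_combination (2 * b) * h2

lemma hasDerivE (γ z : ℝ) :
    HasDerivAt (fun z => Real.exp (-(γ * z))) (-γ * Real.exp (-(γ * z))) z := by
  have h : HasDerivAt (fun z : ℝ => -(γ * z)) (-γ) z := by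
    exact ((hasDerivAt_id z).const_mul γ).neg.congr_deriv (by simp)
  have h2 := (Real.hasDerivAt_exp (-(γ * z))).comp z h
  exact h2.congr_deriv (by ring)

lemma hasDeriv1 (γ z : ℝ) :
    HasDerivAt (fun z => (1 + Real.exp (-(γ * z)))⁻¹)
      (γ * Real.exp (-(γ * z)) / (1 + Real.exp (-(γ * z))) ^ 2) z := by
  have hd : 1 + Real.exp (-(γ * z)) ≠ 0 := by positivity
  have := ((hasDerivE γ z).const_add 1).inv hd
  exact this.congr_deriv (by ring)

lemma deriv1 (γ : ℝ) : deriv (sProfile γ) =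
    fun z => γ * Real.exp (-(γ * z)) / (1 + Real.exp (-(γ * z))) ^ 2 := by
  funext z
  rw [sProfile_eq]
  exact (hasDeriv1 γ z).deriv

lemma hasDeriv2 (γ z : ℝ) :
    HasDerivAt (fun z => γ * Real.exp (-(γ * z)) / (1 + Real.exp (-(γ * z))) ^ 2)
      (γ ^ 2 * Real.exp (-(γ * z)) * (Real.exp (-(γ * z)) - 1)
        / (1 + Real.exp (-(γ * z))) ^ 3) z := by
  have hd : (0:ℝ) < 1 + Real.exp (-(γ * z)) := by positivity
  have hnum : HasDerivAt (fun z => γ * Real.exp (-(γ * z)))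
      (γ * (-γ * Real.exp (-(γ * z)))) z := (hasDerivE γ z).const_mul γ
  have hden : HasDerivAt (fun z => (1 + Real.exp (-(γ * z))) ^ 2)
      (2 * (1 + Real.exp (-(γ * z))) * (-γ * Real.exp (-(γ * z)))) z := by
    exact (((hasDerivE γ z).const_add 1).pow 2).congr_deriv (by norm_num)
  have := hnum.div hden (by positivity)
  exact this.congr_deriv (by rw [div_eq_div_iff (by positivity) (by positivity)]; ring)

lemma deriv2 (γ : ℝ) : deriv (deriv (sProfile γ)) =
    fun z => γ ^ 2 * Real.exp (-(γ * z)) * (Real.exp (-(γ * z)) - 1)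
      / (1 + Real.exp (-(γ * z))) ^ 3 := by
  funext z
  rw [deriv1]
  exact (hasDeriv2 γ z).deriv

theorem stmt0 (L γ : ℝ) (hL : 0 < 1 + 2 * L / 3) (hγ : 0 < γ)
    (hγ2 : γ ^ 2 = 1 / (1 + 2 * L / 3)) :
    (∀ z : ℝ,
      (1 + 2 * L / 3) * deriv (deriv (sProfile γ)) z + fCubic (sProfile γ z) = 0) ∧
    Filter.Tendsto (sProfile γ) Filter.atBot (nhds 0) ∧
    Filter.Tendsto (sProfile γ) Filter.atTop (nhds 1) := by
  have hmul : (1 + 2 * L / 3) * γ ^ 2 = 1 := by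
    rw [hγ2, mul_one_div, div_self (ne_of_gt hL)]
  refine ⟨fun z => ?_, ?_, ?_⟩
  · rw [deriv2, sProfile_eq]
    have hd : (0:ℝ) < 1 + Real.exp (-(γ * z)) := by positivity
    set E := Real.exp (-(γ * z)) with hE
    have hD : (1 + E) ≠ 0 := by positivity
    rw [show (1 + 2 * L / 3) * (γ ^ 2 * E * (E - 1) / (1 + E) ^ 3)
        = ((1 + 2 * L / 3) * γ ^ 2) * (E * (E - 1)) / (1 + E) ^ 3 by ring, hmul, one_mul]
    unfold fCubic
    field_simp
    ring
  · rw [sProfile_eq]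
    apply Filter.Tendsto.inv_tendsto_atTop
    apply Filter.tendsto_atTop_add_const_left
    have h1 : Filter.Tendsto (fun z : ℝ => γ * z) Filter.atBot Filter.atBot :=
      (tendsto_id (α := ℝ)).const_mul_atBot hγ
    exact Real.tendsto_exp_atTop.comp (tendsto_neg_atBot_atTop.comp h1)
  · rw [sProfile_eq]
    have : Filter.Tendsto (fun z => 1 + Real.exp (-(γ * z))) Filter.atTop (nhds 1) := by
      have h0 : Filter.Tendsto (fun z => Real.exp (-(γ * z))) Filter.atTop (nhds 0) :=
        Real.tendsto_exp_atBot.comp (tendsto_neg_atTop_atBot.comp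
          ((tendsto_id (α := ℝ)).const_mul_atTop hγ))
      simpa using (tendsto_const_nhds.add h0)
    simpa using this.inv₀ one_ne_zero
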